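/- arXiv:1212.0619 — 3 statements merged into one kernel-verified Lean document; each statement's English description precedes it below -/
import Mathlib

section
/- Let G₁ be r₁-regular on n₁ vertices and m₁ edges, and G₂ be r₂-regular on n₂ vertices. Then the adjacency spectrum of G₁∨̇G₂ consists of: λᵢ(G₂) for i=2,…,n₂; 0 with multiplicity m₁−n₁; ±√(r₁+λⱼ(G₁)) for j=2,…,n₁; and the three roots of x³ − r₂x² − (n₁n₂ + 2r₁)x + 2r₁r₂ = 0. -/
open Matrix BigOperators Finset

attribute [local instance] Classical.propDecidable

/-- The coronal of a matrix `M`: `1ᵀ (xI − M)⁻¹ 1`. -/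
noncomputable def coronal {n : Type*} [Fintype n] [DecidableEq n]
    (M : Matrix n n ℝ) (x : ℝ) : ℝ :=
  (fun _ => (1 : ℝ)) ⬝ᵥ ((x • (1 : Matrix n n ℝ) - M)⁻¹ *ᵥ fun _ => (1 : ℝ))

/-- The adjacency matrix over ℝ (classical decidability). -/
noncomputable def adjM {V : Type*} (G : SimpleGraph V) : Matrix V V ℝ :=
  letI := Classical.decRel G.Adj
  G.adjMatrix ℝ

/-- The Laplacian matrix over ℝ. -/
noncomputable def lapM {V : Type*} [Fintype V] (G : SimpleGraph V) : Matrix V V ℝ :=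
  letI := Classical.decRel G.Adj
  letI : DecidableEq V := Classical.decEq V
  G.lapMatrix ℝ

/-- The signless Laplacian matrix over ℝ. -/
noncomputable def signlessLapM {V : Type*} [Fintype V] (G : SimpleGraph V) : Matrix V V ℝ :=
  letI := Classical.decRel G.Adj
  letI : DecidableEq V := Classical.decEq V
  G.degMatrix ℝ + G.adjMatrix ℝ

noncomputable instance edgeSetFintype {V : Type*} [Finite V] (G : SimpleGraph V) :
    Fintype G.edgeSet := Fintype.ofFinite _

/-- Subdivision-vertex join. -/
def svJoin {V₁ V₂ : Type*} (G₁ : SimpleGraph V₁) (G₂ : SimpleGraph V₂) :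
    SimpleGraph (V₁ ⊕ (G₁.edgeSet ⊕ V₂)) where
  Adj a b :=
    match a, b with
    | Sum.inl v, Sum.inr (Sum.inl e) => v ∈ (e : Sym2 V₁)
    | Sum.inr (Sum.inl e), Sum.inl v => v ∈ (e : Sym2 V₁)
    | Sum.inl _, Sum.inr (Sum.inr _) => True
    | Sum.inr (Sum.inr _), Sum.inl _ => True
    | Sum.inr (Sum.inr w), Sum.inr (Sum.inr w') => G₂.Adj w w'
    | _, _ => False
  symm := by
    constructor
    rintro (v | e | w) (v' | e' | w') h <;> simp_all <;> exact h.symm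
  loopless := by
    constructor
    rintro (v | e | w) h <;> simp_all

/-- Subdivision-edge join. -/
def seJoin {V₁ V₂ : Type*} (G₁ : SimpleGraph V₁) (G₂ : SimpleGraph V₂) :
    SimpleGraph (V₁ ⊕ (G₁.edgeSet ⊕ V₂)) where
  Adj a b :=
    match a, b with
    | Sum.inl v, Sum.inr (Sum.inl e) => v ∈ (e : Sym2 V₁)
    | Sum.inr (Sum.inl e), Sum.inl v => v ∈ (e : Sym2 V₁)
    | Sum.inr (Sum.inl _), Sum.inr (Sum.inr _) => True
    | Sum.inr (Sum.inr _), Sum.inr (Sum.inl _) => True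
    | Sum.inr (Sum.inr w), Sum.inr (Sum.inr w') => G₂.Adj w w'
    | _, _ => False
  symm := by
    constructor
    rintro (v | e | w) (v' | e' | w') h <;> simp_all <;> exact h.symm
  loopless := by
    constructor
    rintro (v | e | w) h <;> simp_all

/-- Number of spanning trees of a graph. -/
noncomputable def spanningTreeCount {V : Type*} (G : SimpleGraph V) : ℕ :=
  Nat.card {H : G.Subgraph // H.IsSpanning ∧ H.coe.IsTree}

lemma adjM_apply {V : Type*} (G : SimpleGraph V) (i j : V) :
    adjM G i j = if G.Adj i j then 1 else 0 := by
  unfold adjM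
  rw [SimpleGraph.adjMatrix_apply]

noncomputable def incB {n : ℕ} (G : SimpleGraph (Fin n)) : Matrix (Fin n) G.edgeSet ℝ :=
  Matrix.of fun v e => if v ∈ (e : Sym2 (Fin n)) then 1 else 0

lemma incB_mul_transpose {n r : ℕ} (G : SimpleGraph (Fin n)) (hreg : G.IsRegularOfDegree r) :
    incB G * (incB G)ᵀ = (r : ℝ) • 1 + adjM G := by
  ext u v
  rw [Matrix.mul_apply]
  have : ∀ e : G.edgeSet, incB G u e * (incB G)ᵀ e v
      = if (u ∈ (e : Sym2 (Fin n)) ∧ v ∈ (e : Sym2 (Fin n))) then (1:ℝ) else 0 := by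
    intro e
    by_cases h1 : u ∈ (e : Sym2 (Fin n)) <;> by_cases h2 : v ∈ (e : Sym2 (Fin n)) <;>
      simp [incB, Matrix.transpose_apply, h1, h2]
  rw [Finset.sum_congr rfl fun e _ => this e, Finset.sum_boole]
  by_cases huv : u = v
  · subst huv
    simp only [and_self]
    have h1 : (Finset.univ.filter (fun e : G.edgeSet => u ∈ (e : Sym2 (Fin n)))).card
        = Fintype.card {e : G.edgeSet // u ∈ (e : Sym2 (Fin n))} := (Fintype.card_subtype _).symm
    have h2 : Fintype.card {e : G.edgeSet // u ∈ (e : Sym2 (Fin n))}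
        = Fintype.card (G.incidenceSet u) := by
      apply Fintype.card_congr
      exact (Equiv.subtypeSubtypeEquivSubtypeInter (· ∈ G.edgeSet) (u ∈ ·))
    have h3 : Fintype.card (G.incidenceSet u) = G.degree u :=
      G.card_incidenceSet_eq_degree u
    rw [h1, h2, h3, hreg u]
    simp [Matrix.add_apply, Matrix.smul_apply, Matrix.one_apply, adjM_apply]
  · by_cases hadj : G.Adj u v
    · have : (Finset.univ.filter (fun e : G.edgeSet =>
          u ∈ (e : Sym2 (Fin n)) ∧ v ∈ (e : Sym2 (Fin n))))
          = {⟨s(u,v), (G.mem_edgeSet).mpr hadj⟩} := by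
        ext e
        simp only [Finset.mem_filter, Finset.mem_univ, true_and, Finset.mem_singleton]
        constructor
        · rintro ⟨hu, hv⟩
          exact Subtype.ext ((Sym2.mem_and_mem_iff huv).mp ⟨hu, hv⟩)
        · rintro rfl
          exact ⟨Sym2.mem_mk_left _ _, Sym2.mem_mk_right _ _⟩
      rw [this]
      simp [Matrix.add_apply, Matrix.smul_apply, Matrix.one_apply, adjM_apply, huv, hadj]
    · have : (Finset.univ.filter (fun e : G.edgeSet =>
          u ∈ (e : Sym2 (Fin n)) ∧ v ∈ (e : Sym2 (Fin n)))) = ∅ := by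
        ext e
        simp only [Finset.mem_filter, Finset.mem_univ, true_and, Finset.notMem_empty,
          iff_false, not_and]
        intro hu hv
        have : (e : Sym2 (Fin n)) = s(u,v) := (Sym2.mem_and_mem_iff huv).mp ⟨hu, hv⟩
        exact hadj (G.mem_edgeSet.mp (this ▸ e.2))
      rw [this]
      simp [Matrix.add_apply, Matrix.smul_apply, Matrix.one_apply, adjM_apply, huv, hadj]

lemma inv_mulVec_one {n : Type*} [Fintype n] [DecidableEq n] (M : Matrix n n ℝ) (c : ℝ)
    (hM : IsUnit M.det) (h : M *ᵥ (fun _ => (1:ℝ)) = c • (fun _ => (1:ℝ))) (hc : c ≠ 0) :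
    M⁻¹ *ᵥ (fun _ => (1:ℝ)) = c⁻¹ • (fun _ => (1:ℝ)) := by
  have h2 := congrArg (fun v => M⁻¹ *ᵥ v) h
  simp only [mulVec_mulVec, Matrix.nonsing_inv_mul _ hM, Matrix.one_mulVec,
    Matrix.mulVec_smul] at h2
  funext i
  have h4 := congrFun h2 i
  simp only [Pi.smul_apply, smul_eq_mul] at h4 ⊢
  rw [mul_one]
  exact eq_inv_of_mul_eq_one_right h4.symm

def svEquiv (α β γ : Type*) : β ⊕ (α ⊕ γ) ≃ α ⊕ (β ⊕ γ) where
  toFun a := match a with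
    | Sum.inl e => Sum.inr (Sum.inl e)
    | Sum.inr (Sum.inl v) => Sum.inl v
    | Sum.inr (Sum.inr w) => Sum.inr (Sum.inr w)
  invFun a := match a with
    | Sum.inl v => Sum.inr (Sum.inl v)
    | Sum.inr (Sum.inl e) => Sum.inl e
    | Sum.inr (Sum.inr w) => Sum.inr (Sum.inr w)
  left_inv := by rintro (e | v | w) <;> rfl
  right_inv := by rintro (v | e | w) <;> rfl

set_option maxHeartbeats 2000000 in
lemma key (n₁ m₁ n₂ r₁ r₂ : ℕ) (hn₁ : 0 < n₁) (hn₂ : 0 < n₂)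
    (G₁ : SimpleGraph (Fin n₁)) (hreg₁ : G₁.IsRegularOfDegree r₁)
    (hm₁ : Fintype.card G₁.edgeSet = m₁)
    (G₂ : SimpleGraph (Fin n₂)) (hreg₂ : G₂.IsRegularOfDegree r₂)
    (lam₁ : Fin n₁ → ℝ) (hlam₁0 : lam₁ ⟨0, hn₁⟩ = r₁)
    (hchar₁ : ∀ x : ℝ,
      (x • (1 : Matrix (Fin n₁) (Fin n₁) ℝ) - adjM G₁).det = ∏ i, (x - lam₁ i))
    (lam₂ : Fin n₂ → ℝ) (hlam₂0 : lam₂ ⟨0, hn₂⟩ = r₂)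
    (hchar₂ : ∀ x : ℝ,
      (x • (1 : Matrix (Fin n₂) (Fin n₂) ℝ) - adjM G₂).det = ∏ i, (x - lam₂ i))
    (x : ℝ) (hx0 : x ≠ 0) (hx2 : ∀ i, x ≠ lam₂ i) (hx1 : ∀ j, x ^ 2 - r₁ ≠ lam₁ j) :
    x ^ n₁ * (x • (1 : Matrix (Fin n₁ ⊕ (G₁.edgeSet ⊕ Fin n₂)) (Fin n₁ ⊕ (G₁.edgeSet ⊕ Fin n₂)) ℝ)
        - adjM (svJoin G₁ G₂)).det
      = x ^ m₁ * (∏ i ∈ Finset.univ.erase ⟨0, hn₂⟩, (x - lam₂ i))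
        * (∏ j ∈ Finset.univ.erase ⟨0, hn₁⟩, (x ^ 2 - (r₁ + lam₁ j)))
        * (x ^ 3 - r₂ * x ^ 2 - (n₁ * n₂ + 2 * r₁) * x + 2 * r₁ * r₂) := by
  classical
  set A₁ := adjM G₁ with hA₁
  set A₂ := adjM G₂ with hA₂
  set B := incB G₁ with hB
  set J : Matrix (Fin n₁) (Fin n₂) ℝ := Matrix.of fun _ _ => (1:ℝ) with hJ
  set N := x • (1 : Matrix (Fin n₁ ⊕ (G₁.edgeSet ⊕ Fin n₂)) (Fin n₁ ⊕ (G₁.edgeSet ⊕ Fin n₂)) ℝ)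
      - adjM (svJoin G₁ G₂) with hN
  set S := x • (1 : Matrix (Fin n₂) (Fin n₂) ℝ) - A₂ with hS
  -- basic nonvanishing facts
  have hdetS : S.det = ∏ i, (x - lam₂ i) := hchar₂ x
  have hSne : S.det ≠ 0 := by
    rw [hdetS]
    exact Finset.prod_ne_zero_iff.mpr fun i _ => sub_ne_zero.mpr (hx2 i)
  have hdetM₁ : ((x ^ 2 - r₁) • (1 : Matrix (Fin n₁) (Fin n₁) ℝ) - A₁).det
      = ∏ j, (x ^ 2 - r₁ - lam₁ j) := by
    simpa using hchar₁ (x ^ 2 - r₁)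
  have hM₁ne : ((x ^ 2 - r₁) • (1 : Matrix (Fin n₁) (Fin n₁) ℝ) - A₁).det ≠ 0 := by
    rw [hdetM₁]
    exact Finset.prod_ne_zero_iff.mpr fun j _ => sub_ne_zero.mpr (hx1 j)
  have hxr₂ : x - r₂ ≠ 0 := sub_ne_zero.mpr (by rw [← hlam₂0]; exact hx2 _)
  have hx2r₁ : x ^ 2 - 2 * r₁ ≠ 0 := by
    have h := hx1 ⟨0, hn₁⟩
    rw [hlam₁0] at h
    intro h'; apply h; linarith
  -- block decomposition
  have hblock : N.submatrix (svEquiv (Fin n₁) G₁.edgeSet (Fin n₂))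
        (svEquiv (Fin n₁) G₁.edgeSet (Fin n₂))
      = Matrix.fromBlocks (x • (1 : Matrix G₁.edgeSet G₁.edgeSet ℝ))
          (Matrix.fromCols (-(Bᵀ)) 0) (Matrix.fromRows (-B) 0)
          (Matrix.fromBlocks (x • (1 : Matrix (Fin n₁) (Fin n₁) ℝ)) (-J) (-(Jᵀ)) S) := by
    ext i j
    rcases i with e | v | w <;> rcases j with e' | v' | w' <;>
      simp [hN, svJoin, svEquiv, adjM_apply, Matrix.sub_apply,
        Matrix.smul_apply, Matrix.one_apply, incB, hS, hJ, hB,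
        Matrix.fromCols, hA₂]
  haveI hinvE : Invertible (x • (1 : Matrix G₁.edgeSet G₁.edgeSet ℝ)) :=
    Matrix.invertibleOfIsUnitDet _ (by
      rw [Matrix.det_smul, Matrix.det_one, mul_one]
      exact (pow_ne_zero _ hx0).isUnit)
  haveI hinvS : Invertible S := Matrix.invertibleOfIsUnitDet _ hSne.isUnit
  have hinv1 : ⅟(x • (1 : Matrix G₁.edgeSet G₁.edgeSet ℝ)) = x⁻¹ • 1 := by
    apply invOf_eq_right_inv
    rw [Matrix.smul_mul, Matrix.mul_smul, Matrix.one_mul, smul_smul, mul_inv_cancel₀ hx0, one_smul]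
  have hdetE : (x • (1 : Matrix G₁.edgeSet G₁.edgeSet ℝ)).det = x ^ m₁ := by
    rw [Matrix.det_smul, Matrix.det_one, mul_one, hm₁]
  have hcomp : Matrix.fromBlocks (x • (1 : Matrix (Fin n₁) (Fin n₁) ℝ)) (-J) (-(Jᵀ)) S
        - (Matrix.fromRows (-B) 0) * ⅟(x • (1 : Matrix G₁.edgeSet G₁.edgeSet ℝ))
          * (Matrix.fromCols (-(Bᵀ)) 0)
      = Matrix.fromBlocks (x • (1 : Matrix (Fin n₁) (Fin n₁) ℝ) - x⁻¹ • (B * Bᵀ)) (-J) (-(Jᵀ)) S := by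
    rw [hinv1, Matrix.mul_smul, Matrix.mul_one, Matrix.smul_mul,
      Matrix.fromRows_mul_fromCols, Matrix.neg_mul, Matrix.mul_neg, neg_neg,
      Matrix.neg_mul, Matrix.zero_mul, Matrix.mul_zero, neg_zero, Matrix.zero_mul,
      Matrix.fromBlocks_smul]
    rw [sub_eq_add_neg, Matrix.fromBlocks_neg, Matrix.fromBlocks_add]
    congr 1 <;> simp [sub_eq_add_neg]
  -- coronal of S
  have hA₂one : A₂ *ᵥ (fun _ => (1:ℝ)) = fun _ => (r₂:ℝ) := by
    funext w
    rw [hA₂]; unfold adjM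
    have h := SimpleGraph.adjMatrix_mulVec_const_apply_of_regular (α := ℝ) (a := (1:ℝ)) hreg₂ (v := w)
    simpa using h
  have hSone : S *ᵥ (fun _ => (1:ℝ)) = (x - r₂) • (fun _ => (1:ℝ)) := by
    rw [hS, Matrix.sub_mulVec, Matrix.smul_mulVec, Matrix.one_mulVec, hA₂one]
    funext w
    simp [Pi.smul_apply, smul_eq_mul]
  have hSinvone : S⁻¹ *ᵥ (fun _ => (1:ℝ)) = (x - r₂)⁻¹ • (fun _ => (1:ℝ)) :=
    inv_mulVec_one S (x - r₂) hSne.isUnit hSone hxr₂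
  have hJSJ : J * S⁻¹ * Jᵀ = ((n₂ : ℝ) * (x - r₂)⁻¹) • (Matrix.of fun _ _ => (1:ℝ)) := by
    have h1 : S⁻¹ * Jᵀ = Matrix.of fun (_ : Fin n₂) (_ : Fin n₁) => (x - r₂)⁻¹ := by
      ext w v
      have h2 := congrFun hSinvone w
      simpa [Matrix.mul_apply, Matrix.mulVec, dotProduct, hJ] using h2
    rw [Matrix.mul_assoc, h1]
    ext u v
    simp [Matrix.mul_apply, hJ, Matrix.smul_apply, Finset.sum_const, Finset.card_univ]
  -- full determinant via two Schur complements
  have hdetN : N.det = x ^ m₁ * (S.det *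
      (x • (1 : Matrix (Fin n₁) (Fin n₁) ℝ) - x⁻¹ • (B * Bᵀ)
        - ((n₂ : ℝ) * (x - r₂)⁻¹) • (Matrix.of fun _ _ => (1:ℝ))).det) := by
    rw [← Matrix.det_submatrix_equiv_self (svEquiv (Fin n₁) G₁.edgeSet (Fin n₂)) N, hblock,
      Matrix.det_fromBlocks₁₁, hcomp, hdetE, Matrix.det_fromBlocks₂₂,
      invOf_eq_nonsing_inv, Matrix.neg_mul, Matrix.mul_neg, Matrix.neg_mul, neg_neg, hJSJ]
  -- the n₁ × n₁ block
  have hBBt : B * Bᵀ = (r₁:ℝ) • 1 + A₁ := by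
    rw [hB, hA₁]; exact incB_mul_transpose G₁ hreg₁
  have hA' : x • (1 : Matrix (Fin n₁) (Fin n₁) ℝ) - x⁻¹ • (B * Bᵀ)
      = x⁻¹ • ((x ^ 2 - r₁) • (1 : Matrix (Fin n₁) (Fin n₁) ℝ) - A₁) := by
    rw [hBBt]
    ext i j
    simp only [Matrix.sub_apply, Matrix.smul_apply, Matrix.add_apply, smul_eq_mul]
    field_simp
    ring
  have hA'ne : IsUnit (x • (1 : Matrix (Fin n₁) (Fin n₁) ℝ) - x⁻¹ • (B * Bᵀ)).det := by
    rw [hA', Matrix.det_smul]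
    exact (mul_ne_zero (pow_ne_zero _ (inv_ne_zero hx0)) hM₁ne).isUnit
  have hA₁one : A₁ *ᵥ (fun _ => (1:ℝ)) = fun _ => (r₁:ℝ) := by
    funext v
    rw [hA₁]; unfold adjM
    have h := SimpleGraph.adjMatrix_mulVec_const_apply_of_regular (α := ℝ) (a := (1:ℝ)) hreg₁ (v := v)
    simpa using h
  have hcc : x - x⁻¹ * (2 * r₁) = x⁻¹ * (x ^ 2 - 2 * r₁) := by
    field_simp
  have hcne : x - x⁻¹ * (2 * r₁) ≠ 0 := by
    rw [hcc]
    exact mul_ne_zero (inv_ne_zero hx0) hx2r₁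
  have hA'one : (x • (1 : Matrix (Fin n₁) (Fin n₁) ℝ) - x⁻¹ • (B * Bᵀ)) *ᵥ (fun _ => (1:ℝ))
      = (x - x⁻¹ * (2 * r₁)) • (fun _ => (1:ℝ)) := by
    rw [hBBt, Matrix.sub_mulVec, Matrix.smul_mulVec, Matrix.one_mulVec,
      Matrix.smul_mulVec, Matrix.add_mulVec, Matrix.smul_mulVec,
      Matrix.one_mulVec, hA₁one]
    funext v
    simp [Pi.smul_apply, smul_eq_mul]
    ring
  have hA'inv : (x • (1 : Matrix (Fin n₁) (Fin n₁) ℝ) - x⁻¹ • (B * Bᵀ))⁻¹ *ᵥ (fun _ => (1:ℝ))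
      = (x - x⁻¹ * (2 * r₁))⁻¹ • (fun _ => (1:ℝ)) :=
    inv_mulVec_one _ _ hA'ne hA'one hcne
  have hKrank : x • (1 : Matrix (Fin n₁) (Fin n₁) ℝ) - x⁻¹ • (B * Bᵀ)
        - ((n₂ : ℝ) * (x - r₂)⁻¹) • (Matrix.of fun _ _ => (1:ℝ))
      = (x • (1 : Matrix (Fin n₁) (Fin n₁) ℝ) - x⁻¹ • (B * Bᵀ))
        + Matrix.replicateCol Unit (fun (_ : Fin n₁) => -((n₂ : ℝ) * (x - r₂)⁻¹)) * Matrix.replicateRow Unit (fun (_ : Fin n₁) => (1:ℝ)) := by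
    ext i j
    simp [Matrix.mul_apply, Matrix.smul_apply, sub_eq_add_neg]
  have hrowsum : ∀ i, ∑ j, (x • (1 : Matrix (Fin n₁) (Fin n₁) ℝ) - x⁻¹ • (B * Bᵀ))⁻¹ i j
      = (x - x⁻¹ * (2 * r₁))⁻¹ := by
    intro i
    have h := congrFun hA'inv i
    simpa [Matrix.mulVec, dotProduct] using h
  have hsmall : ((1 : Matrix Unit Unit ℝ) + Matrix.replicateRow Unit (fun (_ : Fin n₁) => (1:ℝ))
        * (x • (1 : Matrix (Fin n₁) (Fin n₁) ℝ) - x⁻¹ • (B * Bᵀ))⁻¹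
        * Matrix.replicateCol Unit (fun (_ : Fin n₁) => -((n₂ : ℝ) * (x - r₂)⁻¹))).det
      = 1 - (n₂ : ℝ) * (x - r₂)⁻¹ * n₁ * (x - x⁻¹ * (2 * r₁))⁻¹ := by
    rw [Matrix.det_unique]
    simp only [Matrix.add_apply, Matrix.one_apply_eq, Matrix.mul_apply, Matrix.replicateRow_apply,
      Matrix.replicateCol_apply, one_mul, Finset.univ_unique, Finset.sum_singleton]
    have h5 : ∀ j : Fin n₁, (∑ i, (x • (1 : Matrix (Fin n₁) (Fin n₁) ℝ) - x⁻¹ • (B * Bᵀ))⁻¹ i j)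
        * -((n₂ : ℝ) * (x - r₂)⁻¹)
        = ∑ i, (x • (1 : Matrix (Fin n₁) (Fin n₁) ℝ) - x⁻¹ • (B * Bᵀ))⁻¹ i j
            * -((n₂ : ℝ) * (x - r₂)⁻¹) := fun j => Finset.sum_mul _ _ _
    rw [Finset.sum_congr rfl fun j _ => h5 j, Finset.sum_comm]
    have h6 : ∀ i : Fin n₁, (∑ j, (x • (1 : Matrix (Fin n₁) (Fin n₁) ℝ) - x⁻¹ • (B * Bᵀ))⁻¹ i j
        * -((n₂ : ℝ) * (x - r₂)⁻¹)) = -((x - x⁻¹ * (2 * r₁))⁻¹ * ((n₂ : ℝ) * (x - r₂)⁻¹)) := by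
      intro i
      rw [← Finset.sum_mul, hrowsum i]
      ring
    rw [Finset.sum_congr rfl fun i _ => h6 i, Finset.sum_const, Finset.card_univ,
      Fintype.card_fin, nsmul_eq_mul]
    ring
  have hdetK : (x • (1 : Matrix (Fin n₁) (Fin n₁) ℝ) - x⁻¹ • (B * Bᵀ)
        - ((n₂ : ℝ) * (x - r₂)⁻¹) • (Matrix.of fun _ _ => (1:ℝ))).det
      = x⁻¹ ^ n₁ * (∏ j, (x ^ 2 - r₁ - lam₁ j))
        * (1 - (n₂ : ℝ) * (x - r₂)⁻¹ * n₁ * (x - x⁻¹ * (2 * r₁))⁻¹) := by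
    rw [hKrank, Matrix.det_add_replicateCol_mul_replicateRow hA'ne, hsmall, hA', Matrix.det_smul, hdetM₁,
      Fintype.card_fin]
  have hp₂ : (∏ i, (x - lam₂ i))
      = (x - r₂) * ∏ i ∈ Finset.univ.erase ⟨0, hn₂⟩, (x - lam₂ i) := by
    rw [← Finset.mul_prod_erase Finset.univ _ (Finset.mem_univ ⟨0, hn₂⟩), hlam₂0]
  have hp₁ : (∏ j, (x ^ 2 - r₁ - lam₁ j))
      = (x ^ 2 - 2 * r₁) * ∏ j ∈ Finset.univ.erase ⟨0, hn₁⟩, (x ^ 2 - (r₁ + lam₁ j)) := by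
    rw [← Finset.mul_prod_erase Finset.univ _ (Finset.mem_univ ⟨0, hn₁⟩), hlam₁0]
    congr 1
    · ring
    · exact Finset.prod_congr rfl fun j _ => by ring
  rw [hdetN, hdetS, hdetK, hp₂, hp₁, hcc, inv_pow]
  field_simp
  ring

set_option maxHeartbeats 1000000 in
/-- The `A`-spectrum of `G₁ ∨̇ G₂` for regular graphs `G₁` (degree `r₁`) and `G₂`
(degree `r₂`): the eigenvalues `λᵢ(G₂)` for `i ≥ 2`, `0` with multiplicity `m₁−n₁`,
`±√(r₁+λⱼ(G₁))` for `j ≥ 2`, and the three roots of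
`x³ − r₂x² − (n₁n₂ + 2r₁)x + 2r₁r₂ = 0`. -/
theorem adj_spectrum_svJoin_regular (n₁ m₁ n₂ r₁ r₂ : ℕ) (hn₁ : 0 < n₁) (hn₂ : 0 < n₂)
    (G₁ : SimpleGraph (Fin n₁)) (hreg₁ : G₁.IsRegularOfDegree r₁)
    (hm₁ : G₁.edgeFinset.card = m₁)
    (G₂ : SimpleGraph (Fin n₂)) (hreg₂ : G₂.IsRegularOfDegree r₂)
    (lam₁ : Fin n₁ → ℝ) (hlam₁ : Antitone lam₁) (hlam₁0 : lam₁ ⟨0, hn₁⟩ = r₁)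
    (hchar₁ : ∀ x : ℝ,
      (x • (1 : Matrix (Fin n₁) (Fin n₁) ℝ) - adjM G₁).det = ∏ i, (x - lam₁ i))
    (lam₂ : Fin n₂ → ℝ) (hlam₂ : Antitone lam₂) (hlam₂0 : lam₂ ⟨0, hn₂⟩ = r₂)
    (hchar₂ : ∀ x : ℝ,
      (x • (1 : Matrix (Fin n₂) (Fin n₂) ℝ) - adjM G₂).det = ∏ i, (x - lam₂ i))
    (x : ℝ) (hx0 : x ≠ 0) :
    (x • (1 : Matrix (Fin n₁ ⊕ (G₁.edgeSet ⊕ Fin n₂)) (Fin n₁ ⊕ (G₁.edgeSet ⊕ Fin n₂)) ℝ)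
        - adjM (svJoin G₁ G₂)).det
      = (∏ i ∈ Finset.univ.erase ⟨0, hn₂⟩, (x - lam₂ i))
        * x ^ ((m₁ : ℤ) - (n₁ : ℤ))
        * (∏ j ∈ Finset.univ.erase ⟨0, hn₁⟩, (x ^ 2 - (r₁ + lam₁ j)))
        * (x ^ 3 - r₂ * x ^ 2 - (n₁ * n₂ + 2 * r₁) * x + 2 * r₁ * r₂) := by
  classical
  have hm' : Fintype.card G₁.edgeSet = m₁ := by
    rw [← hm₁, SimpleGraph.edgeFinset_card]
  set A := adjM (svJoin G₁ G₂) with hA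
  set P : Polynomial ℝ := (Polynomial.X ^ n₁) *
    Matrix.det ((Polynomial.X : Polynomial ℝ) • 1 - A.map Polynomial.C) with hP
  set Q : Polynomial ℝ :=
    Polynomial.X ^ m₁
      * (∏ i ∈ Finset.univ.erase ⟨0, hn₂⟩, (Polynomial.X - Polynomial.C (lam₂ i)))
      * (∏ j ∈ Finset.univ.erase ⟨0, hn₁⟩,
          (Polynomial.X ^ 2 - Polynomial.C ((r₁ : ℝ) + lam₁ j)))
      * (Polynomial.X ^ 3 - Polynomial.C ((r₂:ℝ)) * Polynomial.X ^ 2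
          - Polynomial.C ((n₁:ℝ) * (n₂:ℝ) + 2 * (r₁:ℝ)) * Polynomial.X
          + Polynomial.C (2 * (r₁:ℝ) * (r₂:ℝ))) with hQ
  have hevalP : ∀ z : ℝ, P.eval z = z ^ n₁
      * ((z • (1 : Matrix (Fin n₁ ⊕ (G₁.edgeSet ⊕ Fin n₂)) (Fin n₁ ⊕ (G₁.edgeSet ⊕ Fin n₂)) ℝ)
          - A).det) := by
    intro z
    rw [hP]
    simp only [Polynomial.eval_mul, Polynomial.eval_pow, Polynomial.eval_X]
    congr 1
    rw [← Polynomial.coe_evalRingHom, RingHom.map_det]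
    congr 1
    ext i j
    simp [Matrix.map_apply, Matrix.sub_apply, Matrix.smul_apply, Matrix.one_apply,
      apply_ite (Polynomial.eval z), smul_eq_mul]
  have hevalQ : ∀ z : ℝ, Q.eval z = z ^ m₁
      * (∏ i ∈ Finset.univ.erase ⟨0, hn₂⟩, (z - lam₂ i))
      * (∏ j ∈ Finset.univ.erase ⟨0, hn₁⟩, (z ^ 2 - (r₁ + lam₁ j)))
      * (z ^ 3 - r₂ * z ^ 2 - (n₁ * n₂ + 2 * r₁) * z + 2 * r₁ * r₂) := by
    intro z
    rw [hQ]
    simp [Polynomial.eval_prod]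
    try push_cast
    try ring
  have hPQ : P = Q := by
    apply Polynomial.eq_of_infinite_eval_eq
    have hbad : ({(0:ℝ)} ∪ (Set.range lam₂)
        ∪ (⋃ j : Fin n₁, {z : ℝ | z ^ 2 - r₁ = lam₁ j})).Finite := by
      apply Set.Finite.union
      apply Set.Finite.union
      · exact Set.finite_singleton 0
      · exact Set.finite_range lam₂
      · apply Set.finite_iUnion
        intro j
        have heq : {z : ℝ | z ^ 2 - (r₁:ℝ) = lam₁ j}
            = {z : ℝ | (Polynomial.X ^ 2 - Polynomial.C ((r₁:ℝ) + lam₁ j)).IsRoot z} := by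
          ext z
          simp only [Set.mem_setOf_eq, Polynomial.IsRoot, Polynomial.eval_sub,
            Polynomial.eval_pow, Polynomial.eval_X, Polynomial.eval_C, sub_eq_zero]
          constructor <;> intro h <;> linarith
        rw [heq]
        exact Polynomial.finite_setOf_isRoot (Polynomial.X_pow_sub_C_ne_zero (by norm_num) _)
    apply Set.Infinite.mono _ hbad.infinite_compl
    intro z hz
    simp only [Set.mem_compl_iff, Set.mem_union, Set.mem_singleton_iff, Set.mem_range,
      Set.mem_iUnion, Set.mem_setOf_eq, not_or, not_exists] at hz
    obtain ⟨⟨hz0, hz2⟩, hz1⟩ := hz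
    have hz2' : ∀ i, z ≠ lam₂ i := fun i h => hz2 i h.symm
    have hz1' : ∀ j, z ^ 2 - (r₁:ℝ) ≠ lam₁ j := fun j h => hz1 j h
    show P.eval z = Q.eval z
    rw [hevalP, hevalQ]
    exact key n₁ m₁ n₂ r₁ r₂ hn₁ hn₂ G₁ hreg₁ hm' G₂ hreg₂ lam₁ hlam₁0 hchar₁
      lam₂ hlam₂0 hchar₂ z hz0 hz2' hz1'
  have hx := congrArg (Polynomial.eval x) hPQ
  rw [hevalP, hevalQ] at hx
  have hzp : (x : ℝ) ^ ((m₁:ℤ) - (n₁:ℤ)) = x ^ m₁ / x ^ n₁ := by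
    rw [zpow_sub₀ hx0, zpow_natCast, zpow_natCast]
  rw [hzp]
  have hxn : (x : ℝ) ^ n₁ ≠ 0 := pow_ne_zero _ hx0
  field_simp
  linear_combination hx
end

section
/- If G₁ and G₂ are A-cospectral regular graphs (hence with the same degree and same numbers of vertices and edges), and H is any graph, then the subdivision-vertex joins G₁∨̇H and G₂∨̇H are A-cospectral. -/
open Matrix BigOperators Finset

attribute [local instance] Classical.propDecidable

open Polynomial

section Aux
variable {n : ℕ} (G : SimpleGraph (Fin n))

-- row sums of adjM
lemma adjM_row_sum {r : ℕ} (hreg : G.IsRegularOfDegree r) (u : Fin n) :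
    ∑ k, adjM G u k = (r : ℝ) := by
  classical
  have : ∑ k, adjM G u k = (letI := Classical.decRel G.Adj; (G.adjMatrix ℝ *ᵥ (fun _ => (1:ℝ))) u) := by
    simp [adjM, Matrix.mulVec, dotProduct]
  rw [this]
  letI := Classical.decRel G.Adj
  rw [SimpleGraph.adjMatrix_mulVec_apply]
  simp only [Finset.sum_const, nsmul_eq_mul, mul_one, SimpleGraph.card_neighborFinset_eq_degree]
  exact_mod_cast congrArg Nat.cast (hreg u)

-- the incidence gram matrix
lemma incidence_gram {r : ℕ} (hreg : G.IsRegularOfDegree r) (u v : Fin n) :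
    ∑ e : G.edgeSet, (if u ∈ (e : Sym2 (Fin n)) then (1:ℝ) else 0) *
        (if v ∈ (e : Sym2 (Fin n)) then (1:ℝ) else 0)
      = (if u = v then (r:ℝ) else 0) + adjM G u v := by
  classical
  have key : ∑ e : G.edgeSet, (if u ∈ (e : Sym2 (Fin n)) then (1:ℝ) else 0) *
        (if v ∈ (e : Sym2 (Fin n)) then (1:ℝ) else 0)
      = ((univ.filter (fun e : G.edgeSet => u ∈ (e : Sym2 (Fin n)) ∧ v ∈ (e : Sym2 (Fin n)))).card : ℝ) := by
    rw [Finset.card_filter]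
    push_cast
    congr 1
    ext e
    by_cases h1 : u ∈ (e : Sym2 (Fin n)) <;> by_cases h2 : v ∈ (e : Sym2 (Fin n)) <;>
      simp [h1, h2]
  rw [key]
  by_cases huv : u = v
  · subst huv
    have hcard : (univ.filter (fun e : G.edgeSet => u ∈ (e : Sym2 (Fin n)) ∧ u ∈ (e : Sym2 (Fin n)))).card
        = (G.incidenceFinset u).card := by
      refine Finset.card_bij (fun e _ => (e : Sym2 (Fin n))) ?_ ?_ ?_
      · intro e he
        simp only [Finset.mem_filter, Finset.mem_univ, true_and, and_self_iff] at he
        rw [SimpleGraph.mem_incidenceFinset]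
        exact ⟨e.2, he⟩
      · intro e₁ _ e₂ _ h
        exact Subtype.ext h
      · intro z hz
        rw [SimpleGraph.mem_incidenceFinset] at hz
        exact ⟨⟨z, hz.1⟩, by simp [hz.2], rfl⟩
    rw [hcard, SimpleGraph.card_incidenceFinset_eq_degree, hreg u]
    simp [adjM]
  · have hadj0 : adjM G u v = if G.Adj u v then (1:ℝ) else 0 := by simp [adjM]
    by_cases hadj : G.Adj u v
    · have hfil : (univ.filter (fun e : G.edgeSet => u ∈ (e : Sym2 (Fin n)) ∧ v ∈ (e : Sym2 (Fin n))))
          = {⟨s(u,v), (G.mem_edgeSet).mpr hadj⟩} := by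
        ext e
        simp only [Finset.mem_filter, Finset.mem_univ, true_and, Finset.mem_singleton]
        constructor
        · intro h
          exact Subtype.ext ((Sym2.mem_and_mem_iff huv).mp h)
        · rintro rfl
          exact ⟨Sym2.mem_mk_left u v, Sym2.mem_mk_right u v⟩
      rw [hfil]
      simp [hadj0, hadj, huv]
    · have hfil : (univ.filter (fun e : G.edgeSet => u ∈ (e : Sym2 (Fin n)) ∧ v ∈ (e : Sym2 (Fin n))))
          = ∅ := by
        ext e
        simp only [Finset.mem_filter, Finset.mem_univ, true_and, Finset.notMem_empty, iff_false]
        intro h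
        have := (Sym2.mem_and_mem_iff huv).mp h
        apply hadj
        rw [← G.mem_edgeSet, ← this]
        exact e.2
      rw [hfil]
      simp [hadj0, hadj, huv]

end Aux

lemma eval_charpoly' {m : Type*} [Fintype m] [DecidableEq m] (M : Matrix m m ℝ) (x : ℝ) :
    M.charpoly.eval x = (x • (1 : Matrix m m ℝ) - M).det := by
  rw [Matrix.charpoly, ← Polynomial.coe_evalRingHom, RingHom.map_det]
  congr 1
  ext i j
  by_cases h : i = j
  · subst h
    simp [Matrix.charmatrix_apply_eq, Matrix.one_apply]
  · simp [Matrix.charmatrix_apply_ne _ _ _ h, Matrix.one_apply, h]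

lemma fintype_card_eq_nat_card {α : Type*} (I : Fintype α) :
    @Fintype.card α I = Nat.card α := (@Nat.card_eq_fintype_card α I).symm

section Master
variable {W : Type*} [Fintype W] (H : SimpleGraph W)

lemma master {n r : ℕ} (G : SimpleGraph (Fin n))
    (hreg : G.IsRegularOfDegree r) (x : ℝ) (hx : x ≠ 0)
    (hS : (x • (1 : Matrix W W ℝ) - adjM H).det ≠ 0)
    (hd : x ^ 2 - 2 * r ≠ 0) :
    (x • (1 : Matrix (Fin n ⊕ (↥G.edgeSet ⊕ W)) (Fin n ⊕ (↥G.edgeSet ⊕ W)) ℝ)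
        - adjM (svJoin G H)).det
      = x ^ (Nat.card G.edgeSet) * (x • (1 : Matrix W W ℝ) - adjM H).det * (x⁻¹) ^ n *
        ((adjM G).charpoly.eval (x ^ 2 - r)) *
        (1 - x * coronal (adjM H) x / (x ^ 2 - 2 * r) * n) := by
  classical
  set A := adjM G with hA
  set S : Matrix W W ℝ := x • 1 - adjM H with hSdef
  set B : Matrix (Fin n) G.edgeSet ℝ :=
    Matrix.of (fun v e => if v ∈ (e : Sym2 (Fin n)) then (1:ℝ) else 0) with hB
  set JW : Matrix (Fin n) W ℝ := Matrix.of (fun _ _ => (1:ℝ)) with hJW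
  set K : Matrix (Fin n) (↥G.edgeSet ⊕ W) ℝ := fromCols B JW with hK
  set D : Matrix (↥G.edgeSet ⊕ W) (↥G.edgeSet ⊕ W) ℝ :=
    fromBlocks (x • (1 : Matrix G.edgeSet G.edgeSet ℝ)) 0 0 S with hD
  -- block decomposition
  have hblock : x • (1 : Matrix (Fin n ⊕ (↥G.edgeSet ⊕ W)) (Fin n ⊕ (↥G.edgeSet ⊕ W)) ℝ)
      - adjM (svJoin G H) = fromBlocks (x • 1) (-K) (-Kᵀ) D := by
    ext i j
    rw [Matrix.sub_apply, adjM, SimpleGraph.adjMatrix_apply]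
    rcases i with v | e | w <;> rcases j with v' | e' | w' <;>
      simp [adjM, svJoin, fromBlocks, Matrix.one_apply, hK, hD, hB, hJW, hSdef,
        Matrix.fromCols, Sum.elim] <;>
      try congr 1
  haveI hSinv : Invertible S := Matrix.invertibleOfIsUnitDet S (isUnit_iff_ne_zero.mpr hS)
  haveI hxinv : Invertible (x • (1 : Matrix G.edgeSet G.edgeSet ℝ)) := by
    apply Matrix.invertibleOfIsUnitDet
    rw [Matrix.det_smul, Matrix.det_one, mul_one]
    exact (isUnit_iff_ne_zero.mpr (pow_ne_zero _ hx))
  haveI hDinv : Invertible D := by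
    rw [hD]
    exact Matrix.fromBlocksZero₂₁Invertible _ _ _
  have hinvD : (⅟D : Matrix (↥G.edgeSet ⊕ W) (↥G.edgeSet ⊕ W) ℝ)
      = fromBlocks (x⁻¹ • (1 : Matrix G.edgeSet G.edgeSet ℝ)) 0 0 S⁻¹ := by
    apply invOf_eq_right_inv
    rw [hD, Matrix.fromBlocks_multiply]
    rw [Matrix.mul_nonsing_inv S (isUnit_iff_ne_zero.mpr hS)]
    simp [Matrix.smul_mul, Matrix.mul_smul, smul_smul, mul_inv_cancel₀ hx,
      inv_mul_cancel₀ hx, one_smul, Matrix.fromBlocks_one]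
  rw [hblock, Matrix.det_fromBlocks₂₂, hinvD]
  set γ := coronal (adjM H) x with hγ
  set Jn : Matrix (Fin n) (Fin n) ℝ := Matrix.of (fun _ _ => (1:ℝ)) with hJn
  have hgram : B * Bᵀ = (r:ℝ) • 1 + A := by
    ext u v
    rw [Matrix.mul_apply]
    have := incidence_gram G hreg u v
    simp only [hB, Matrix.of_apply, Matrix.transpose_apply] at *
    rw [this]
    simp only [Matrix.add_apply, Matrix.smul_apply, Matrix.one_apply, smul_eq_mul, hA]
    split <;> simp
  have hcor : JW * S⁻¹ * JWᵀ = γ • Jn := by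
    ext u v
    have : (JW * S⁻¹ * JWᵀ) u v = ∑ w, (∑ w', S⁻¹ w' w) := by
      simp [Matrix.mul_apply, hJW]
    rw [this]
    have : γ = ∑ w', (∑ w, S⁻¹ w' w) := by
      simp [hγ, coronal, dotProduct, Matrix.mulVec, ← hSdef]
    rw [this, Finset.sum_comm]
    simp [hJn]
  have hKDK : (-K) * (fromBlocks (x⁻¹ • (1 : Matrix G.edgeSet G.edgeSet ℝ)) 0 0 S⁻¹) * (-Kᵀ)
      = x⁻¹ • ((r:ℝ) • 1 + A) + γ • Jn := by
    rw [Matrix.neg_mul, Matrix.neg_mul, Matrix.mul_neg, neg_neg, hK,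
      Matrix.transpose_fromCols, Matrix.fromCols_mul_fromBlocks,
      Matrix.fromCols_mul_fromRows]
    simp only [Matrix.mul_zero, Matrix.zero_mul, add_zero, zero_add]
    rw [Matrix.mul_smul, Matrix.mul_one]  -- B * (x⁻¹ • 1) = x⁻¹ • B
    rw [Matrix.smul_mul, hgram, hcor]
  rw [hKDK]
  have hinner : x • (1 : Matrix (Fin n) (Fin n) ℝ) - (x⁻¹ • ((r:ℝ) • 1 + A) + γ • Jn)
      = x⁻¹ • (((x ^ 2 - r) • 1 - A) - (x * γ) • Jn) := by
    ext i j
    simp only [Matrix.sub_apply, Matrix.add_apply, Matrix.smul_apply, Matrix.one_apply,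
      smul_eq_mul]
    by_cases h : i = j <;> simp [h] <;> field_simp <;> ring
  rw [hinner, Matrix.det_smul]
  have hPJ : (((x ^ 2 - r) • 1 - A) : Matrix (Fin n) (Fin n) ℝ) * Jn = (x ^ 2 - 2 * r) • Jn := by
    ext u v
    rw [Matrix.mul_apply]
    simp only [Matrix.sub_apply, Matrix.smul_apply, Matrix.one_apply, smul_eq_mul, hJn,
      Matrix.of_apply, mul_one]
    rw [Finset.sum_sub_distrib]
    rw [adjM_row_sum G hreg u]
    simp [Finset.sum_ite_eq]
    ring
  have hfac : (((x ^ 2 - r) • 1 - A) : Matrix (Fin n) (Fin n) ℝ) - (x * γ) • Jn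
      = ((x ^ 2 - r) • 1 - A) * (1 - (x * γ / (x ^ 2 - 2 * r)) • Jn) := by
    rw [Matrix.mul_sub, Matrix.mul_one, Matrix.mul_smul, hPJ, smul_smul,
      div_mul_cancel₀ _ hd]
  rw [hfac, Matrix.det_mul]
  have hJdet : ((1 : Matrix (Fin n) (Fin n) ℝ) - (x * γ / (x ^ 2 - 2 * r)) • Jn).det
      = 1 - x * γ / (x ^ 2 - 2 * r) * n := by
    set c := x * γ / (x ^ 2 - 2 * r) with hc
    have hsplit : (1 : Matrix (Fin n) (Fin n) ℝ) - c • Jn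
        = 1 + (Matrix.of (fun (_ : Fin n) (_ : Unit) => -c)) * (Matrix.of fun (_ : Unit) (_ : Fin n) => (1:ℝ)) := by
      ext i j
      simp [Matrix.mul_apply, hJn, Matrix.one_apply, sub_eq_add_neg]
    rw [hsplit, Matrix.det_one_add_mul_comm, Matrix.det_unique]
    simp [Matrix.mul_apply]
    ring
  rw [hJdet]
  have hdetD : D.det = x ^ (Nat.card G.edgeSet) * S.det := by
    rw [hD, Matrix.det_fromBlocks_zero₂₁, Matrix.det_smul, Matrix.det_one, mul_one,
      fintype_card_eq_nat_card]
  rw [hdetD]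
  rw [← eval_charpoly' A (x ^ 2 - r), Fintype.card_fin]
  ring

end Master

section Spectral
variable {n : ℕ} (G : SimpleGraph (Fin n))

lemma eig_bound {r : ℕ} (hreg : G.IsRegularOfDegree r) {lam : ℝ}
    (h : (adjM G).charpoly.eval lam = 0) : |lam| ≤ r := by
  classical
  rw [eval_charpoly'] at h
  obtain ⟨v, hv, hv0⟩ := Matrix.exists_mulVec_eq_zero_iff.mpr h
  have heig : ∀ i, lam * v i = ∑ j ∈ G.neighborFinset i, v j := by
    intro i
    have hEq := congrFun hv0 i
    simp only [Pi.zero_apply] at hEq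
    letI := Classical.decRel G.Adj
    have h2 : ((lam • (1 : Matrix (Fin n) (Fin n) ℝ) - adjM G) *ᵥ v) i
        = lam * v i - ∑ j ∈ G.neighborFinset i, v j := by
      rw [Matrix.sub_mulVec]
      simp only [Pi.sub_apply]
      congr 1
      · simp [Matrix.mulVec, dotProduct, Matrix.one_apply, Finset.sum_ite_eq]
      · show (adjM G *ᵥ v) i = _
        simp only [adjM]
        rw [SimpleGraph.adjMatrix_mulVec_apply]
    rw [hEq] at h2
    linarith [h2]
  obtain ⟨j, hj⟩ : ∃ j, v j ≠ 0 := by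
    by_contra hc
    push_neg at hc
    exact hv (funext hc)
  obtain ⟨i, -, hi⟩ := Finset.exists_max_image Finset.univ (fun k => |v k|) ⟨j, Finset.mem_univ j⟩
  have hvi : 0 < |v i| := lt_of_lt_of_le (abs_pos.mpr hj) (hi j (Finset.mem_univ j))
  have hbound : |lam| * |v i| ≤ r * |v i| := by
    rw [← abs_mul]
    calc |lam * v i| = |∑ j ∈ G.neighborFinset i, v j| := by rw [heig i]
    _ ≤ ∑ j ∈ G.neighborFinset i, |v j| := Finset.abs_sum_le_sum_abs _ _
    _ ≤ ∑ _j ∈ G.neighborFinset i, |v i| :=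
        Finset.sum_le_sum (fun k _ => hi k (Finset.mem_univ k))
    _ = (G.degree i) * |v i| := by rw [Finset.sum_const, SimpleGraph.card_neighborFinset_eq_degree]; ring
    _ = r * |v i| := by rw [hreg i]
  exact le_of_mul_le_mul_right hbound hvi

lemma r_is_root {r : ℕ} (hn : 0 < n) (hreg : G.IsRegularOfDegree r) :
    (adjM G).charpoly.eval (r : ℝ) = 0 := by
  classical
  rw [eval_charpoly']
  rw [← Matrix.exists_mulVec_eq_zero_iff]
  refine ⟨fun _ => 1, ?_, ?_⟩
  · intro hc
    have := congrFun hc ⟨0, hn⟩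
    simp at this
  · funext i
    rw [Matrix.sub_mulVec]
    simp only [Pi.sub_apply, Pi.zero_apply]
    have h1 : (((r : ℝ) • (1 : Matrix (Fin n) (Fin n) ℝ)) *ᵥ fun _ => (1:ℝ)) i = r := by
      simp [Matrix.mulVec, dotProduct, Matrix.one_apply, Finset.sum_ite_eq]
    have h2 : (adjM G *ᵥ fun _ => (1:ℝ)) i = r := by
      simp only [Matrix.mulVec, dotProduct, mul_one]
      exact adjM_row_sum G hreg i
    rw [h1, h2, sub_self]

lemma card_edges (r : ℕ) (hreg : G.IsRegularOfDegree r) :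
    2 * Nat.card G.edgeSet = n * r := by
  classical
  have := G.sum_degrees_eq_twice_card_edges
  have h3 : ∀ (I : Fintype G.edgeSet), #(@SimpleGraph.edgeFinset _ G I) = Nat.card G.edgeSet := by
    intro I
    exact (@Set.toFinset_card _ G.edgeSet I).trans (fintype_card_eq_nat_card I)
  rw [h3 _] at this
  have h2 : ∑ v, G.degree v = n * r := by
    rw [Finset.sum_congr rfl (fun v _ => hreg v)]
    simp [Finset.sum_const, Fintype.card_fin, mul_comm]
  omega

end Spectral

lemma charpoly_isEmpty {m : Type*} [Fintype m] [IsEmpty m] [DecidableEq m]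
    (M : Matrix m m ℝ) : M.charpoly = 1 :=
  Matrix.det_isEmpty


/-- If `G₁` and `G₂` are `A`-cospectral regular graphs and `H` is any graph, then
`G₁ ∨̇ H` and `G₂ ∨̇ H` are `A`-cospectral. -/
theorem svJoin_A_cospectral_left (n r₁ r₂ : ℕ) (G₁ G₂ : SimpleGraph (Fin n))
    (hreg₁ : G₁.IsRegularOfDegree r₁) (hreg₂ : G₂.IsRegularOfDegree r₂)
    (hcosp : (adjM G₁).charpoly = (adjM G₂).charpoly)
    {W : Type*} [Fintype W] (H : SimpleGraph W) :
    (adjM (svJoin G₁ H)).charpoly = (adjM (svJoin G₂ H)).charpoly := by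
  classical
  have hrr : n = 0 ∨ r₁ = r₂ := by
    rcases Nat.eq_zero_or_pos n with h | h
    · exact Or.inl h
    · right
      have h1 : |(r₁:ℝ)| ≤ r₂ :=
        eig_bound G₂ hreg₂ (by rw [← hcosp]; exact r_is_root G₁ h hreg₁)
      have h2 : |(r₂:ℝ)| ≤ r₁ :=
        eig_bound G₁ hreg₁ (by rw [hcosp]; exact r_is_root G₂ h hreg₂)
      rw [abs_of_nonneg (Nat.cast_nonneg _)] at h1 h2
      exact_mod_cast le_antisymm h1 h2
  have hc1 := card_edges G₁ r₁ hreg₁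
  have hc2 := card_edges G₂ r₂ hreg₂
  have hm : Nat.card G₁.edgeSet = Nat.card G₂.edgeSet := by
    rcases hrr with h | h
    · subst h; simp only [Nat.zero_mul] at hc1 hc2; omega
    · subst h; rw [← hc2] at hc1; omega
  set q : Polynomial ℝ := (adjM H).charpoly *
    (Polynomial.X * ((Polynomial.X ^ 2 - Polynomial.C ((2:ℝ) * r₁)) *
      (Polynomial.X ^ 2 - Polynomial.C ((2:ℝ) * r₂)))) with hqdef
  have hq : q ≠ 0 := by
    refine mul_ne_zero ((adjM H).charpoly_monic.ne_zero) ?_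
    refine mul_ne_zero Polynomial.X_ne_zero ?_
    exact mul_ne_zero (Polynomial.X_pow_sub_C_ne_zero (by norm_num) _)
      (Polynomial.X_pow_sub_C_ne_zero (by norm_num) _)
  apply Polynomial.eq_of_infinite_eval_eq
  have hinf : Set.Infinite {x : ℝ | ¬ q.IsRoot x} := by
    have h2 := (Polynomial.finite_setOf_isRoot hq).infinite_compl
    simpa [Set.compl_setOf] using h2
  refine Set.Infinite.mono ?_ hinf
  intro x hx
  simp only [Set.mem_setOf_eq, Polynomial.IsRoot, hqdef, Polynomial.eval_mul,
    Polynomial.eval_X, Polynomial.eval_sub, Polynomial.eval_pow, Polynomial.eval_C,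
    mul_eq_zero, not_or] at hx
  obtain ⟨hpH, hx0, hd1, hd2⟩ := hx
  have hdetS : (x • (1 : Matrix W W ℝ) - adjM H).det ≠ 0 := by
    rw [← eval_charpoly']; exact hpH
  show (adjM (svJoin G₁ H)).charpoly.eval x = (adjM (svJoin G₂ H)).charpoly.eval x
  rw [eval_charpoly', eval_charpoly']
  rw [master H G₁ hreg₁ x hx0 hdetS hd1, master H G₂ hreg₂ x hx0 hdetS hd2]
  rw [hm]
  rcases hrr with h | h
  · subst h
    rw [charpoly_isEmpty (adjM G₁), charpoly_isEmpty (adjM G₂)]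
    simp
  · subst h
    rw [hcosp]
end

section
/- Let G₁ be r₁-regular on n₁ vertices and m₁ edges, and G₂ be r₂-regular on n₂ vertices. Then the adjacency spectrum of the subdivision-edge join G₁∨̲G₂ consists of: λᵢ(G₂) for i=2,…,n₂; 0 with multiplicity m₁−n₁; ±√(r₁+λⱼ(G₁)) for j=2,…,n₁; and the three roots of x³ − r₂x² − (m₁n₂ + 2r₁)x + 2r₁r₂ = 0. -/
open Matrix BigOperators Finset

attribute [local instance] Classical.propDecidable

section Incidence
variable {V : Type*} [Fintype V] (G : SimpleGraph V)

lemma sum_edge_subtype (f : Sym2 V → ℝ) :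
    ∑ e : G.edgeSet, f e = ∑ x ∈ G.edgeFinset, f x :=
  (Finset.sum_subtype G.edgeFinset (fun x => SimpleGraph.mem_edgeFinset) f).symm

lemma sum_edge_ind [DecidableEq V] (v : V) :
    ∑ e : G.edgeSet, (if v ∈ (e : Sym2 V) then (1:ℝ) else 0) = G.degree v := by
  classical
  rw [sum_edge_subtype G (fun x => if v ∈ x then (1:ℝ) else 0), Finset.sum_boole, ← SimpleGraph.incidenceFinset_eq_filter,
    SimpleGraph.card_incidenceFinset_eq_degree]

lemma sum_edge_ind_pair [DecidableEq V] {v w : V} (hvw : v ≠ w) :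
    ∑ e : G.edgeSet, (if v ∈ (e : Sym2 V) then (1:ℝ) else 0) *
      (if w ∈ (e : Sym2 V) then (1:ℝ) else 0) = if G.Adj v w then 1 else 0 := by
  classical
  rw [sum_edge_subtype G (fun x => (if v ∈ x then (1:ℝ) else 0) * (if w ∈ x then (1:ℝ) else 0))]
  have : ∀ x ∈ G.edgeFinset, (if v ∈ x then (1:ℝ) else 0) * (if w ∈ x then (1:ℝ) else 0)
      = if x = s(v,w) then 1 else 0 := by
    intro x hx
    by_cases h : v ∈ x ∧ w ∈ x
    · rw [if_pos h.1, if_pos h.2, if_pos ((Sym2.mem_and_mem_iff hvw).1 h), one_mul]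
    · have : ¬ x = s(v,w) := fun hc => h ((Sym2.mem_and_mem_iff hvw).2 hc)
      rw [if_neg this]
      rcases not_and_or.1 h with h' | h' <;> simp [h']
    
  rw [Finset.sum_congr rfl this, Finset.sum_ite_eq' G.edgeFinset (s(v,w)) (fun _ => (1:ℝ))]
  by_cases hadj : G.Adj v w
  · rw [if_pos hadj, if_pos (by rwa [SimpleGraph.mem_edgeFinset, SimpleGraph.mem_edgeSet])]
  · rw [if_neg hadj, if_neg (by rwa [SimpleGraph.mem_edgeFinset, SimpleGraph.mem_edgeSet])]

lemma sum_edge_const (c : ℝ) :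
    ∑ _e : G.edgeSet, c = G.edgeFinset.card * c := by
  rw [Finset.sum_const, Finset.card_univ, SimpleGraph.edgeFinset_card, nsmul_eq_mul]

end Incidence
section MatAux
variable {n : Type*} [Fintype n] [DecidableEq n]

lemma inv_mulVec_ones {M : Matrix n n ℝ} (hM : IsUnit M.det) {c : ℝ}
    (h : M *ᵥ (fun _ => (1:ℝ)) = c • (fun _ => (1:ℝ))) (hc : c ≠ 0) :
    M⁻¹ *ᵥ (fun _ => (1:ℝ)) = c⁻¹ • (fun _ => (1:ℝ)) := by
  have h2 : M⁻¹ *ᵥ (M *ᵥ (fun _ => (1:ℝ))) = M⁻¹ *ᵥ (c • fun _ => (1:ℝ)) := by rw [h]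
  rw [Matrix.mulVec_mulVec, Matrix.nonsing_inv_mul M hM, Matrix.one_mulVec,
    Matrix.mulVec_smul] at h2
  have h3 := congrArg (fun v => c⁻¹ • v) h2
  simpa [smul_smul, inv_mul_cancel₀ hc] using h3.symm

/-- determinant of `N - κ • J` for `N` with constant row sums. -/
lemma det_sub_const {N : Matrix n n ℝ} (hN : IsUnit N.det) {c : ℝ} (hc : c ≠ 0)
    (h : N *ᵥ (fun _ => (1:ℝ)) = c • (fun _ => (1:ℝ))) (κ : ℝ) :
    (N - Matrix.of (fun _ _ : n => κ)).det = N.det * (1 - κ * (Fintype.card n) / c) := by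
  have heq : N - Matrix.of (fun _ _ : n => κ)
      = N + Matrix.replicateCol Unit (fun _ => -κ) * Matrix.replicateRow Unit (fun _ => (1:ℝ)) := by
    ext i j
    simp [Matrix.mul_apply, Matrix.sub_apply, Matrix.add_apply, Matrix.replicateCol, Matrix.replicateRow]
    ring
  rw [heq, Matrix.det_add_replicateCol_mul_replicateRow hN]
  congr 1
  have hinv := inv_mulVec_ones hN h hc
  have hcol : N⁻¹ * Matrix.replicateCol Unit (fun _ => -κ) = Matrix.replicateCol Unit (fun _ => -κ * c⁻¹) := by
    ext i u
    have : (N⁻¹ *ᵥ (fun _ => (1:ℝ))) i = c⁻¹ := by rw [hinv]; simp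
    simp only [Matrix.mulVec, dotProduct] at this
    simp only [Matrix.mul_apply, Matrix.replicateCol_apply]
    calc ∑ j, N⁻¹ i j * (-κ) = (-κ) * ∑ j, N⁻¹ i j * 1 := by
          rw [Finset.mul_sum]; exact Finset.sum_congr rfl (fun j _ => by ring)
      _ = -κ * c⁻¹ := by rw [this]
  rw [Matrix.mul_assoc]
  erw [hcol]
  rw [Matrix.det_unique]
  simp only [Matrix.add_apply, Matrix.one_apply_eq, Matrix.mul_apply, Matrix.replicateRow_apply,
    Matrix.replicateCol_apply, Finset.sum_const, Finset.card_univ, one_mul]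
  push_cast
  field_simp
  linear_combination (-(κ * ↑(Fintype.card n))) * mul_inv_cancel₀ hc

lemma card_edge_any {V : Type*} [Fintype V] (G : SimpleGraph V) [i : Fintype G.edgeSet]
    {m : ℕ} (hm : G.edgeFinset.card = m) :
    ∀ j : Fintype G.edgeSet, @Fintype.card _ j = m := fun j =>
  (@Fintype.card_congr _ _ j i (Equiv.refl _)).trans
    ((@SimpleGraph.edgeFinset_card _ G i).symm.trans hm)

lemma edgeFinset_card_any {V : Type*} [Fintype V] (G : SimpleGraph V) [i : Fintype G.edgeSet]
    {m : ℕ} (hm : G.edgeFinset.card = m) :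
    ∀ j : Fintype G.edgeSet, (@SimpleGraph.edgeFinset _ G j).card = m := fun j => by
  have h2 : @SimpleGraph.edgeFinset _ G j = @SimpleGraph.edgeFinset _ G i := by
    congr 1
    exact Subsingleton.elim _ _
  rw [h2]; exact hm

end MatAux
lemma key_det (n₁ m₁ n₂ r₁ r₂ : ℕ) (hn₁ : 0 < n₁) (hn₂ : 0 < n₂)
    (G₁ : SimpleGraph (Fin n₁)) (hreg₁ : G₁.IsRegularOfDegree r₁)
    (hm₁ : G₁.edgeFinset.card = m₁)
    (G₂ : SimpleGraph (Fin n₂)) (hreg₂ : G₂.IsRegularOfDegree r₂)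
    (lam₁ : Fin n₁ → ℝ) (hlam₁0 : lam₁ ⟨0, hn₁⟩ = r₁)
    (hchar₁ : ∀ x : ℝ,
      (x • (1 : Matrix (Fin n₁) (Fin n₁) ℝ) - adjM G₁).det = ∏ i, (x - lam₁ i))
    (lam₂ : Fin n₂ → ℝ) (hlam₂0 : lam₂ ⟨0, hn₂⟩ = r₂)
    (hchar₂ : ∀ x : ℝ,
      (x • (1 : Matrix (Fin n₂) (Fin n₂) ℝ) - adjM G₂).det = ∏ i, (x - lam₂ i))
    (x : ℝ) (hx0 : x ≠ 0)
    (h1 : (∏ j, (x ^ 2 - (r₁ + lam₁ j))) ≠ 0)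
    (h2 : (∏ i, (x - lam₂ i)) ≠ 0) :
    x ^ n₁ *
    (x • (1 : Matrix (Fin n₁ ⊕ (G₁.edgeSet ⊕ Fin n₂)) (Fin n₁ ⊕ (G₁.edgeSet ⊕ Fin n₂)) ℝ)
        - adjM (seJoin G₁ G₂)).det
      = (∏ i ∈ Finset.univ.erase ⟨0, hn₂⟩, (x - lam₂ i))
        * x ^ m₁
        * (∏ j ∈ Finset.univ.erase ⟨0, hn₁⟩, (x ^ 2 - (r₁ + lam₁ j)))
        * (x ^ 3 - r₂ * x ^ 2 - (m₁ * n₂ + 2 * r₁) * x + 2 * r₁ * r₂) := by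
  classical
  -- basic nonvanishing facts
  have hP10 : x ^ 2 - 2 * r₁ ≠ 0 := by
    have := Finset.prod_ne_zero_iff.1 h1 ⟨0, hn₁⟩ (Finset.mem_univ _)
    rw [hlam₁0] at this; intro hc; apply this; rw [← hc]; ring
  have hP20 : x - r₂ ≠ 0 := by
    have := Finset.prod_ne_zero_iff.1 h2 ⟨0, hn₂⟩ (Finset.mem_univ _)
    rwa [hlam₂0] at this
  -- handshake
  have hElim : ∀ i : Fintype G₁.edgeSet, @Fintype.card _ i = m₁ := card_edge_any G₁ hm₁
  have hhs : (n₁ : ℝ) * r₁ = 2 * m₁ := by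
    have h := G₁.sum_degrees_eq_twice_card_edges
    have hsum : ∑ v, G₁.degree v = n₁ * r₁ := by
      rw [Finset.sum_congr rfl (fun v _ => hreg₁ v), Finset.sum_const, Finset.card_univ,
        Fintype.card_fin, smul_eq_mul]
    rw [hsum, edgeFinset_card_any G₁ hm₁ _] at h
    exact_mod_cast h
  -- matrices
  set A₁ := adjM G₁ with hA₁
  set A₂ := adjM G₂ with hA₂
  set Rm : Matrix (Fin n₁) G₁.edgeSet ℝ :=
    Matrix.of (fun v e => if v ∈ (e : Sym2 (Fin n₁)) then (1:ℝ) else 0) with hRm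
  set B : Matrix G₁.edgeSet (Fin n₁ ⊕ Fin n₂) ℝ :=
    Matrix.of (fun ε p => Sum.elim (fun v => -(Rm v ε)) (fun _ => (-1:ℝ)) p) with hB
  set Cm : Matrix (Fin n₁ ⊕ Fin n₂) G₁.edgeSet ℝ :=
    Matrix.of (fun p ε => Sum.elim (fun v => -(Rm v ε)) (fun _ => (-1:ℝ)) p) with hCm
  set D : Matrix (Fin n₁ ⊕ Fin n₂) (Fin n₁ ⊕ Fin n₂) ℝ :=
    Matrix.fromBlocks (x • (1 : Matrix (Fin n₁) (Fin n₁) ℝ)) 0 0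
      (x • (1 : Matrix (Fin n₂) (Fin n₂) ℝ) - A₂) with hD
  let e : (G₁.edgeSet ⊕ (Fin n₁ ⊕ Fin n₂)) ≃ (Fin n₁ ⊕ (G₁.edgeSet ⊕ Fin n₂)) :=
    ⟨fun p => match p with
      | Sum.inl ε => Sum.inr (Sum.inl ε)
      | Sum.inr (Sum.inl v) => Sum.inl v
      | Sum.inr (Sum.inr w) => Sum.inr (Sum.inr w),
     fun p => match p with
      | Sum.inl v => Sum.inr (Sum.inl v)
      | Sum.inr (Sum.inl ε) => Sum.inl ε
      | Sum.inr (Sum.inr w) => Sum.inr (Sum.inr w),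
     by rintro (ε | v | w) <;> rfl, by rintro (v | ε | w) <;> rfl⟩
  -- Step 1 : block structure
  have hblock :
      (x • (1 : Matrix (Fin n₁ ⊕ (G₁.edgeSet ⊕ Fin n₂)) (Fin n₁ ⊕ (G₁.edgeSet ⊕ Fin n₂)) ℝ)
        - adjM (seJoin G₁ G₂)).submatrix e e
      = Matrix.fromBlocks (x • (1 : Matrix G₁.edgeSet G₁.edgeSet ℝ)) B Cm D := by
    have he1 : ∀ ε : G₁.edgeSet, e (Sum.inl ε) = Sum.inr (Sum.inl ε) := fun _ => rfl
    have he2 : ∀ v : Fin n₁, e (Sum.inr (Sum.inl v)) = Sum.inl v := fun _ => rfl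
    have he3 : ∀ w : Fin n₂, e (Sum.inr (Sum.inr w)) = Sum.inr (Sum.inr w) := fun _ => rfl
    ext p q
    rcases p with (ε | v | w) <;> rcases q with (ε' | v' | w') <;>
      simp [Matrix.submatrix_apply, he1, he2, he3, hB, hCm, hRm, hD, hA₁, hA₂, adjM, seJoin,
        Matrix.one_apply, Matrix.sub_apply, Matrix.smul_apply, Matrix.fromBlocks,
        Sum.elim, mul_comm, SimpleGraph.adjMatrix]
    all_goals congr
  have hdet1 :
      (x • (1 : Matrix (Fin n₁ ⊕ (G₁.edgeSet ⊕ Fin n₂)) (Fin n₁ ⊕ (G₁.edgeSet ⊕ Fin n₂)) ℝ)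
        - adjM (seJoin G₁ G₂)).det
      = (Matrix.fromBlocks (x • (1 : Matrix G₁.edgeSet G₁.edgeSet ℝ)) B Cm D).det := by
    rw [← hblock, Matrix.det_submatrix_equiv_self]
  -- Step 2 : first Schur complement (eliminate the edge block)
  letI hinvE : Invertible (x • (1 : Matrix G₁.edgeSet G₁.edgeSet ℝ)) :=
    ⟨x⁻¹ • 1, by rw [Matrix.smul_mul, Matrix.one_mul, smul_smul, inv_mul_cancel₀ hx0, one_smul],
      by rw [Matrix.mul_smul, Matrix.mul_one, smul_smul, inv_mul_cancel₀ hx0, one_smul]⟩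
  have hdet2 : (Matrix.fromBlocks (x • (1 : Matrix G₁.edgeSet G₁.edgeSet ℝ)) B Cm D).det
      = x ^ m₁ * (D - Cm * (x⁻¹ • (1 : Matrix G₁.edgeSet G₁.edgeSet ℝ)) * B).det := by
    rw [Matrix.det_fromBlocks₁₁]
    have hio : ⅟(x • (1 : Matrix G₁.edgeSet G₁.edgeSet ℝ)) = x⁻¹ • 1 := rfl
    rw [hio, Matrix.det_smul, Matrix.det_one, mul_one, hElim _]
  -- Step 3 : inner blocks
  set S11 : Matrix (Fin n₁) (Fin n₁) ℝ := x⁻¹ • ((x ^ 2 - r₁) • 1 - A₁) with hS11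
  set S22 : Matrix (Fin n₂) (Fin n₂) ℝ :=
    (x • 1 - A₂) - Matrix.of (fun _ _ => x⁻¹ * m₁) with hS22
  set S12 : Matrix (Fin n₁) (Fin n₂) ℝ := Matrix.of (fun _ _ => -(x⁻¹ * r₁)) with hS12
  set S21 : Matrix (Fin n₂) (Fin n₁) ℝ := Matrix.of (fun _ _ => -(x⁻¹ * r₁)) with hS21
  have hdeg : ∀ v, ∑ ε : G₁.edgeSet, (if v ∈ (ε : Sym2 (Fin n₁)) then (1:ℝ) else 0) = r₁ := by
    intro v; rw [sum_edge_ind]; exact_mod_cast congrArg (Nat.cast (R := ℝ)) (hreg₁ v)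
  have hschur1 : D - Cm * (x⁻¹ • (1 : Matrix G₁.edgeSet G₁.edgeSet ℝ)) * B
      = Matrix.fromBlocks S11 S12 S21 S22 := by
    have hCB : Cm * (x⁻¹ • (1 : Matrix G₁.edgeSet G₁.edgeSet ℝ)) * B = x⁻¹ • (Cm * B) := by
      rw [Matrix.mul_smul, Matrix.mul_one, Matrix.smul_mul]
    rw [hCB]
    ext p q
    rcases p with (v | w) <;> rcases q with (v' | w')
    · simp only [Matrix.sub_apply, Matrix.smul_apply, Matrix.fromBlocks_apply₁₁, hD, hS11,
        Matrix.mul_apply, hCm, hB, Matrix.of_apply, Sum.elim_inl, neg_mul_neg, smul_eq_mul]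
      by_cases hvv : v = v'
      · subst hvv
        have hsum : ∑ ε : G₁.edgeSet, Rm v ε * Rm v ε = r₁ := by
          rw [← hdeg v]
          exact Finset.sum_congr rfl fun ε _ => by
            by_cases h : v ∈ (ε : Sym2 (Fin n₁)) <;> simp [hRm, h]
        rw [hsum]
        have hA₁vv : A₁ v v = 0 := by simp [hA₁, adjM]
        simp [Matrix.one_apply_eq, hA₁vv]
        field_simp
      · have hsum : ∑ ε : G₁.edgeSet, Rm v ε * Rm v' ε = A₁ v v' := by
          have := sum_edge_ind_pair G₁ hvv
          simp only [hRm, Matrix.of_apply]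
          rw [this, hA₁]
          simp [adjM]
        rw [hsum, Matrix.one_apply_ne hvv]
        ring
    · simp only [Matrix.sub_apply, Matrix.smul_apply, Matrix.fromBlocks_apply₁₂, hD, hS12,
        Matrix.mul_apply, hCm, hB, Matrix.of_apply, Sum.elim_inl, Sum.elim_inr,
        Matrix.fromBlocks_apply₁₂, Matrix.zero_apply, smul_eq_mul, mul_neg, mul_one, neg_neg]
      have hs : ∑ ε : G₁.edgeSet, Rm v ε = r₁ := by rw [← hdeg v]; rfl
      rw [hs]
      ring
    · simp only [Matrix.sub_apply, Matrix.smul_apply, Matrix.fromBlocks_apply₂₁, hD, hS21,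
        Matrix.mul_apply, hCm, hB, Matrix.of_apply, Sum.elim_inl, Sum.elim_inr,
        Matrix.zero_apply, smul_eq_mul, neg_mul_neg, one_mul]
      have hs : ∑ ε : G₁.edgeSet, Rm v' ε = r₁ := by rw [← hdeg v']; rfl
      rw [hs]
      ring
    · simp only [Matrix.sub_apply, Matrix.smul_apply, Matrix.fromBlocks_apply₂₂, hD, hS22,
        Matrix.mul_apply, hCm, hB, Matrix.of_apply, Sum.elim_inr, neg_mul_neg, one_mul,
        smul_eq_mul]
      rw [Finset.sum_const, Finset.card_univ, hElim _]
      simp [nsmul_eq_mul]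
  -- determinant of S11
  have hdetS11 : S11.det = (x⁻¹) ^ n₁ * ∏ j, (x ^ 2 - (r₁ + lam₁ j)) := by
    rw [hS11, Matrix.det_smul, Fintype.card_fin, hchar₁ (x ^ 2 - r₁)]
    congr 1
    exact Finset.prod_congr rfl fun j _ => by ring
  have hS11ne : S11.det ≠ 0 := by
    rw [hdetS11]
    exact mul_ne_zero (pow_ne_zero _ (inv_ne_zero hx0)) h1
  haveI : Invertible S11 := S11.invertibleOfIsUnitDet (isUnit_iff_ne_zero.2 hS11ne)
  have hdet3 : (Matrix.fromBlocks S11 S12 S21 S22).det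
      = S11.det * (S22 - S21 * S11⁻¹ * S12).det := by
    rw [Matrix.det_fromBlocks₁₁, Matrix.invOf_eq_nonsing_inv]
  -- Step 4 : second Schur complement
  set c := x⁻¹ * (x ^ 2 - 2 * r₁) with hc
  have hcne : c ≠ 0 := mul_ne_zero (inv_ne_zero hx0) hP10
  have hA₁ones : A₁ *ᵥ (fun _ => (1:ℝ)) = (r₁ : ℝ) • (fun _ => (1:ℝ)) := by
    ext v
    have := SimpleGraph.adjMatrix_mulVec_const_apply_of_regular (α := ℝ) hreg₁ (v := v) (a := 1)
    simpa [hA₁, adjM, Function.const] using this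
  have hrow : S11 *ᵥ (fun _ => (1:ℝ)) = c • (fun _ => (1:ℝ)) := by
    rw [hS11, Matrix.smul_mulVec, Matrix.sub_mulVec, Matrix.smul_mulVec,
      Matrix.one_mulVec, hA₁ones]
    ext v
    simp only [Pi.smul_apply, Pi.sub_apply, smul_eq_mul, hc, mul_one]
    ring
  have hS11unit : IsUnit S11.det := isUnit_iff_ne_zero.2 hS11ne
  have hrowinv : ∀ v, ∑ u, S11⁻¹ v u = c⁻¹ := by
    intro v
    have h3 := congrFun (inv_mulVec_ones hS11unit hrow hcne) v
    simpa [Matrix.mulVec, dotProduct] using h3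
  have hSS : S21 * S11⁻¹ * S12
      = Matrix.of (fun _ _ : Fin n₂ => (n₁ : ℝ) * ((x⁻¹ * r₁) ^ 2 * c⁻¹)) := by
    rw [Matrix.mul_assoc]
    have hmid : S11⁻¹ * S12 = Matrix.of (fun _ _ => -(x⁻¹ * r₁) * c⁻¹) := by
      ext v w
      simp only [Matrix.mul_apply, hS12, Matrix.of_apply]
      rw [← Finset.sum_mul, hrowinv v]
      ring
    rw [hmid]
    ext w w'
    simp only [Matrix.mul_apply, hS21, Matrix.of_apply]
    rw [Finset.sum_const, Finset.card_univ, Fintype.card_fin, nsmul_eq_mul]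
    ring
  -- Step 5 : determinant of the final block
  have hA₂ones : (x • (1 : Matrix (Fin n₂) (Fin n₂) ℝ) - A₂) *ᵥ (fun _ => (1:ℝ))
      = (x - r₂) • (fun _ => (1:ℝ)) := by
    have h4 : A₂ *ᵥ (fun _ => (1:ℝ)) = (r₂ : ℝ) • (fun _ => (1:ℝ)) := by
      ext w
      have := SimpleGraph.adjMatrix_mulVec_const_apply_of_regular (α := ℝ) hreg₂ (v := w) (a := 1)
      simpa [hA₂, adjM, Function.const] using this
    rw [Matrix.sub_mulVec, Matrix.smul_mulVec, Matrix.one_mulVec, h4]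
    ext w
    simp only [Pi.smul_apply, Pi.sub_apply, smul_eq_mul, mul_one]
  have hdetA₂ne : ((x • (1 : Matrix (Fin n₂) (Fin n₂) ℝ) - A₂)).det ≠ 0 := by
    rw [hchar₂ x]; exact h2
  set κ := x⁻¹ * (m₁ : ℝ) + (n₁ : ℝ) * ((x⁻¹ * r₁) ^ 2 * c⁻¹) with hκ
  have hTeq : S22 - S21 * S11⁻¹ * S12
      = (x • (1 : Matrix (Fin n₂) (Fin n₂) ℝ) - A₂) - Matrix.of (fun _ _ : Fin n₂ => κ) := by
    rw [hSS, hS22]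
    ext w w'
    simp only [Matrix.sub_apply, Matrix.of_apply, hκ]
    ring
  have hdetT : (S22 - S21 * S11⁻¹ * S12).det
      = (∏ i, (x - lam₂ i)) * (1 - κ * n₂ / (x - r₂)) := by
    rw [hTeq, det_sub_const (isUnit_iff_ne_zero.2 hdetA₂ne) hP20 hA₂ones κ, hchar₂ x,
      Fintype.card_fin]
  -- Step 6 : assemble
  rw [hdet1, hdet2, hschur1, hdet3, hdetS11, hdetT]
  have hsplit1 : ∏ j, (x ^ 2 - (r₁ + lam₁ j))
      = (x ^ 2 - 2 * r₁) * ∏ j ∈ Finset.univ.erase ⟨0, hn₁⟩, (x ^ 2 - (r₁ + lam₁ j)) := by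
    rw [← Finset.mul_prod_erase Finset.univ _ (Finset.mem_univ ⟨0, hn₁⟩), hlam₁0]
    congr 1
    ring
  have hsplit2 : ∏ i, (x - lam₂ i)
      = (x - r₂) * ∏ i ∈ Finset.univ.erase ⟨0, hn₂⟩, (x - lam₂ i) := by
    rw [← Finset.mul_prod_erase Finset.univ _ (Finset.mem_univ ⟨0, hn₂⟩), hlam₂0]
  have hκ2 : κ = x⁻¹ * (m₁ : ℝ) + 2 * m₁ * r₁ * (x⁻¹) ^ 2 * c⁻¹ := by
    rw [hκ]
    linear_combination ((r₁ : ℝ) * (x⁻¹) ^ 2 * c⁻¹) * hhs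
  rw [hsplit1, hsplit2, hκ2, hc]
  have hxn : x ^ n₁ ≠ 0 := pow_ne_zero _ hx0
  rw [inv_pow]
  field_simp
  ring
/-- The `A`-spectrum of the subdivision-edge join `G₁ ∨̲ G₂` for regular graphs `G₁`
(degree `r₁`) and `G₂` (degree `r₂`): the eigenvalues `λᵢ(G₂)` for `i ≥ 2`, `0` with
multiplicity `m₁−n₁`, `±√(r₁+λⱼ(G₁))` for `j ≥ 2`, and the three roots of
`x³ − r₂x² − (m₁n₂ + 2r₁)x + 2r₁r₂ = 0`. -/
theorem adj_spectrum_seJoin_regular (n₁ m₁ n₂ r₁ r₂ : ℕ) (hn₁ : 0 < n₁) (hn₂ : 0 < n₂)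
    (G₁ : SimpleGraph (Fin n₁)) (hreg₁ : G₁.IsRegularOfDegree r₁)
    (hm₁ : G₁.edgeFinset.card = m₁)
    (G₂ : SimpleGraph (Fin n₂)) (hreg₂ : G₂.IsRegularOfDegree r₂)
    (lam₁ : Fin n₁ → ℝ) (hlam₁ : Antitone lam₁) (hlam₁0 : lam₁ ⟨0, hn₁⟩ = r₁)
    (hchar₁ : ∀ x : ℝ,
      (x • (1 : Matrix (Fin n₁) (Fin n₁) ℝ) - adjM G₁).det = ∏ i, (x - lam₁ i))
    (lam₂ : Fin n₂ → ℝ) (hlam₂ : Antitone lam₂) (hlam₂0 : lam₂ ⟨0, hn₂⟩ = r₂)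
    (hchar₂ : ∀ x : ℝ,
      (x • (1 : Matrix (Fin n₂) (Fin n₂) ℝ) - adjM G₂).det = ∏ i, (x - lam₂ i))
    (x : ℝ) (hx0 : x ≠ 0) :
    (x • (1 : Matrix (Fin n₁ ⊕ (G₁.edgeSet ⊕ Fin n₂)) (Fin n₁ ⊕ (G₁.edgeSet ⊕ Fin n₂)) ℝ)
        - adjM (seJoin G₁ G₂)).det
      = (∏ i ∈ Finset.univ.erase ⟨0, hn₂⟩, (x - lam₂ i))
        * x ^ ((m₁ : ℤ) - (n₁ : ℤ))
        * (∏ j ∈ Finset.univ.erase ⟨0, hn₁⟩, (x ^ 2 - (r₁ + lam₁ j)))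
        * (x ^ 3 - r₂ * x ^ 2 - (m₁ * n₂ + 2 * r₁) * x + 2 * r₁ * r₂) := by
  classical
  set M := adjM (seJoin G₁ G₂) with hM
  set P : Polynomial ℝ :=
    Polynomial.X ^ n₁ *
      ((Polynomial.X : Polynomial ℝ) •
          (1 : Matrix (Fin n₁ ⊕ (G₁.edgeSet ⊕ Fin n₂)) (Fin n₁ ⊕ (G₁.edgeSet ⊕ Fin n₂))
            (Polynomial ℝ)) - M.map Polynomial.C).det with hP
  set Q : Polynomial ℝ :=
    (∏ i ∈ Finset.univ.erase ⟨0, hn₂⟩, (Polynomial.X - Polynomial.C (lam₂ i)))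
      * Polynomial.X ^ m₁
      * (∏ j ∈ Finset.univ.erase ⟨0, hn₁⟩,
          (Polynomial.X ^ 2 - Polynomial.C ((r₁ : ℝ) + lam₁ j)))
      * (Polynomial.X ^ 3 - Polynomial.C (r₂ : ℝ) * Polynomial.X ^ 2
          - Polynomial.C ((m₁ : ℝ) * n₂ + 2 * r₁) * Polynomial.X
          + Polynomial.C (2 * (r₁ : ℝ) * r₂)) with hQ
  have hevalP : ∀ y : ℝ, Polynomial.eval y P
      = y ^ n₁ * (y • (1 : Matrix (Fin n₁ ⊕ (G₁.edgeSet ⊕ Fin n₂))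
          (Fin n₁ ⊕ (G₁.edgeSet ⊕ Fin n₂)) ℝ) - M).det := by
    intro y
    have hmap : ((Polynomial.X : Polynomial ℝ) •
          (1 : Matrix (Fin n₁ ⊕ (G₁.edgeSet ⊕ Fin n₂)) (Fin n₁ ⊕ (G₁.edgeSet ⊕ Fin n₂))
            (Polynomial ℝ)) - M.map Polynomial.C).map (Polynomial.evalRingHom y)
        = y • (1 : Matrix (Fin n₁ ⊕ (G₁.edgeSet ⊕ Fin n₂))
            (Fin n₁ ⊕ (G₁.edgeSet ⊕ Fin n₂)) ℝ) - M := by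
      ext p q
      by_cases hpq : p = q <;>
        simp [Matrix.map_apply, Matrix.sub_apply, Matrix.smul_apply, Matrix.one_apply, hpq]
    have hdet := RingHom.map_det (Polynomial.evalRingHom y)
      ((Polynomial.X : Polynomial ℝ) •
          (1 : Matrix (Fin n₁ ⊕ (G₁.edgeSet ⊕ Fin n₂)) (Fin n₁ ⊕ (G₁.edgeSet ⊕ Fin n₂))
            (Polynomial ℝ)) - M.map Polynomial.C)
    rw [RingHom.mapMatrix_apply, hmap] at hdet
    simp only [hP, Polynomial.eval_mul, Polynomial.eval_pow, Polynomial.eval_X]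
    rw [show ∀ p : Polynomial ℝ, Polynomial.evalRingHom y p = Polynomial.eval y p
      from fun _ => rfl] at hdet
    rw [hdet]
  have hevalQ : ∀ y : ℝ, Polynomial.eval y Q
      = (∏ i ∈ Finset.univ.erase ⟨0, hn₂⟩, (y - lam₂ i))
        * y ^ m₁
        * (∏ j ∈ Finset.univ.erase ⟨0, hn₁⟩, (y ^ 2 - (r₁ + lam₁ j)))
        * (y ^ 3 - r₂ * y ^ 2 - (m₁ * n₂ + 2 * r₁) * y + 2 * r₁ * r₂) := by
    intro y
    simp [hQ, Polynomial.eval_prod]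
  set g : Polynomial ℝ := Polynomial.X
      * (∏ j, (Polynomial.X ^ 2 - Polynomial.C ((r₁ : ℝ) + lam₁ j)))
      * (∏ i, (Polynomial.X - Polynomial.C (lam₂ i))) with hg
  have hgne : g ≠ 0 := by
    refine Polynomial.Monic.ne_zero (Polynomial.Monic.mul (Polynomial.Monic.mul
      Polynomial.monic_X ?_) ?_)
    · exact Polynomial.monic_prod_of_monic _ _
        (fun j _ => Polynomial.monic_X_pow_sub_C _ (by norm_num))
    · exact Polynomial.monic_prod_of_monic _ _ (fun i _ => Polynomial.monic_X_sub_C _)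
  have hsub : {y : ℝ | Polynomial.IsRoot g y}ᶜ
      ⊆ {y : ℝ | Polynomial.eval y P = Polynomial.eval y Q} := by
    intro y hy
    simp only [Set.mem_compl_iff, Set.mem_setOf_eq, Polynomial.IsRoot, hg,
      Polynomial.eval_mul, Polynomial.eval_X, Polynomial.eval_prod, Polynomial.eval_pow,
      Polynomial.eval_sub, Polynomial.eval_C, mul_ne_zero_iff] at hy
    obtain ⟨⟨hy0, hy1⟩, hy2⟩ := hy
    rw [Set.mem_setOf_eq, hevalP y, hevalQ y]
    exact key_det n₁ m₁ n₂ r₁ r₂ hn₁ hn₂ G₁ hreg₁ hm₁ G₂ hreg₂ lam₁ hlam₁0 hchar₁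
      lam₂ hlam₂0 hchar₂ y hy0 hy1 hy2
  have hPQ : P = Q := Polynomial.eq_of_infinite_eval_eq P Q
    (((Polynomial.finite_setOf_isRoot hgne).infinite_compl).mono hsub)
  have hx := congrArg (Polynomial.eval x) hPQ
  rw [hevalP x, hevalQ x] at hx
  have hzp : x ^ ((m₁ : ℤ) - (n₁ : ℤ)) = x ^ m₁ / x ^ n₁ := by
    rw [zpow_sub₀ hx0, zpow_natCast, zpow_natCast]
  rw [hzp]
  have hxn : x ^ n₁ ≠ 0 := pow_ne_zero _ hx0
  field_simp
  linear_combination hx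
end
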